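/- Let (g,σ,B) be a symmetric triple with g = h ⊕ m and an adapted decomposition m = z ⊕ W ⊕ z* with maximal center, so that z = z(g) is totally isotropic, B(z,W) = B(z*,W) = 0, B restricted to W is positive definite, ⁅h, z ⊕ W⁆ ⊆ z, and ⁅h, z*⁆ ⊆ z ⊕ W. For a,b ∈ z* define F(a,b) : W → W by F(a,b)(w) = pr_W(⁅a, ⁅b, w⁆⁆), where pr_W is the projection of m onto W along z ⊕ z*. Then for all a,b,c,d ∈ z*: (1) F(a,b) is self-adjoint with respect to B restricted to W, i.e. B(F(a,b)w, w') = B(w, F(a,b)w') for all w,w' ∈ W; (2) F(a,b) = F(b,a); (3) F(a,b) ∘ F(c,d) = F(c,d) ∘ F(a,b). -/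

import Mathlib

/-- For a symmetric triple with an adapted decomposition `m = z ⊕ W ⊕ z*`
with maximal center, the operators `F(a,b) = pr_W ∘ ad(a) ∘ ad(b)|_W` (`a,b ∈ z*`) are
self-adjoint w.r.t. `B|_W`, symmetric in `(a,b)`, and pairwise commute. -/
theorem F_operators_selfadjoint_commute
    (L : Type*) [LieRing L] [LieAlgebra ℝ L] [FiniteDimensional ℝ L]
    (σ : L →ₗ⁅ℝ⁆ L) (hσ : ∀ x, σ (σ x) = x)
    (H M : Submodule ℝ L)
    (hH : ∀ x, x ∈ H ↔ σ x = x)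
    (hM : ∀ x, x ∈ M ↔ σ x = -x)
    (hcompl : IsCompl H M)
    (hHspan : H = Submodule.span ℝ {z : L | ∃ x ∈ M, ∃ y ∈ M, ⁅x, y⁆ = z})
    (B : LinearMap.BilinForm ℝ L)
    (hBnd : B.Nondegenerate)
    (hBsymm : ∀ x y : L, B x y = B y x)
    (hBσ : ∀ x y : L, B (σ x) (σ y) = B x y)
    (hBad : ∀ x y z : L, B ⁅x, y⁆ z = B x ⁅y, z⁆)
    -- adapted decomposition m = z ⊕ W ⊕ z* with maximal center
    (W Zstar : Submodule ℝ L)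
    (hWM : W ≤ M) (hZstarM : Zstar ≤ M)
    (hdisj₁ : Disjoint (LieAlgebra.center ℝ L).toSubmodule W)
    (hdisj₂ : Disjoint ((LieAlgebra.center ℝ L).toSubmodule ⊔ W) Zstar)
    (hsum : (LieAlgebra.center ℝ L).toSubmodule ⊔ W ⊔ Zstar = M)
    (hZiso : ∀ x ∈ LieAlgebra.center ℝ L, ∀ y ∈ LieAlgebra.center ℝ L, B x y = 0)
    (hZstariso : ∀ x ∈ Zstar, ∀ y ∈ Zstar, B x y = 0)
    (hWZ : ∀ w ∈ W, ∀ z ∈ LieAlgebra.center ℝ L, B w z = 0)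
    (hWZstar : ∀ w ∈ W, ∀ a ∈ Zstar, B w a = 0)
    (hWpos : ∀ w ∈ W, w ≠ 0 → 0 < B w w)
    (hpair₁ : ∀ a ∈ LieAlgebra.center ℝ L, (∀ b ∈ Zstar, B a b = 0) → a = 0)
    (hpair₂ : ∀ b ∈ Zstar, (∀ a ∈ LieAlgebra.center ℝ L, B a b = 0) → b = 0)
    (hbr₁ : ∀ h ∈ H, ∀ x ∈ (LieAlgebra.center ℝ L).toSubmodule ⊔ W,
      ⁅h, x⁆ ∈ (LieAlgebra.center ℝ L).toSubmodule)
    (hbr₂ : ∀ h ∈ H, ∀ x ∈ Zstar,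
      ⁅h, x⁆ ∈ (LieAlgebra.center ℝ L).toSubmodule ⊔ W)
    -- pr_W : projection of m onto W along z ⊕ z*
    (prW : L →ₗ[ℝ] L)
    (hprW₁ : ∀ x : L, prW x ∈ W)
    (hprW₂ : ∀ w ∈ W, prW w = w)
    (hprW₃ : ∀ z ∈ LieAlgebra.center ℝ L, prW z = 0)
    (hprW₄ : ∀ a ∈ Zstar, prW a = 0) :
    ∀ a ∈ Zstar, ∀ b ∈ Zstar, ∀ c ∈ Zstar, ∀ d ∈ Zstar,
      -- (1) F(a,b) is self-adjoint with respect to B|_W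
      (∀ w ∈ W, ∀ w' ∈ W, B (prW ⁅a, ⁅b, w⁆⁆) w' = B w (prW ⁅a, ⁅b, w'⁆⁆)) ∧
      -- (2) F(a,b) = F(b,a)
      (∀ w ∈ W, prW ⁅a, ⁅b, w⁆⁆ = prW ⁅b, ⁅a, w⁆⁆) ∧
      -- (3) F(a,b) ∘ F(c,d) = F(c,d) ∘ F(a,b)
      (∀ w ∈ W, prW ⁅a, ⁅b, prW ⁅c, ⁅d, w⁆⁆⁆⁆ = prW ⁅c, ⁅d, prW ⁅a, ⁅b, w⁆⁆⁆⁆) := by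
  intro a ha b hb c hc d hd
  -- elements of the center bracket to zero
  have hcen : ∀ z ∈ (LieAlgebra.center ℝ L).toSubmodule, ∀ x : L, ⁅x, z⁆ = 0 := by
    intro z hz x
    exact (LieModule.mem_maxTrivSubmodule ℝ L L z).mp hz x
  -- brackets of two elements of M lie in H
  have hbrM : ∀ x ∈ M, ∀ y ∈ M, ⁅x, y⁆ ∈ H := by
    intro x hx y hy
    rw [hH, LieHom.map_lie, (hM x).mp hx, (hM y).mp hy, neg_lie, lie_neg, neg_neg]
  -- B vanishes on M × H
  have hMH : ∀ x ∈ M, ∀ h ∈ H, B x h = 0 := by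
    intro x hx h hh
    have e := hBσ x h
    rw [(hM x).mp hx, (hH h).mp hh, map_neg, LinearMap.neg_apply] at e
    linarith
  -- center is orthogonal to W (both orders)
  have hZWB : ∀ z ∈ (LieAlgebra.center ℝ L).toSubmodule, ∀ w ∈ W, B z w = 0 := by
    intro z hz w hw
    rw [hBsymm]
    exact hWZ w hw z hz
  -- [W, W] = 0
  have hWW : ∀ w ∈ W, ∀ w' ∈ W, ⁅w, w'⁆ = 0 := by
    intro w hw w' hw'
    have ht : ⁅w, w'⁆ ∈ H := hbrM w (hWM hw) w' (hWM hw')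
    apply hBnd.1
    intro n
    rw [hBsymm]
    have hn : n ∈ H ⊔ M := by rw [hcompl.sup_eq_top]; exact Submodule.mem_top
    obtain ⟨p, hp, q, hq, rfl⟩ := Submodule.mem_sup.mp hn
    have h1 : B p ⁅w, w'⁆ = 0 := by
      rw [← hBad p w w']
      exact hZWB _ (hbr₁ p hp w (Submodule.mem_sup_right hw)) w' hw'
    have h2 : B q ⁅w, w'⁆ = 0 := hMH q hq _ ht
    rw [map_add, LinearMap.add_apply, h1, h2, add_zero]
  -- a W-element brackets to 0 with anything in z ⊕ W
  have hWx : ∀ w ∈ W, ∀ x ∈ (LieAlgebra.center ℝ L).toSubmodule ⊔ W, ⁅w, x⁆ = 0 := by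
    intro w hw x hx
    obtain ⟨z, hz, u, hu, rfl⟩ := Submodule.mem_sup.mp hx
    rw [lie_add, hcen z hz w, hWW w hw u hu, add_zero]
  -- x - prW x is central for x ∈ z ⊕ W
  have hsub : ∀ x ∈ (LieAlgebra.center ℝ L).toSubmodule ⊔ W,
      x - prW x ∈ (LieAlgebra.center ℝ L).toSubmodule := by
    intro x hx
    obtain ⟨z, hz, u, hu, rfl⟩ := Submodule.mem_sup.mp hx
    rw [map_add, hprW₂ u hu, hprW₃ z hz, zero_add, add_sub_cancel_right]
    exact hz
  -- prW can be dropped inside a bracket, for arguments in z ⊕ W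
  have hliepr : ∀ x ∈ (LieAlgebra.center ℝ L).toSubmodule ⊔ W, ∀ y : L,
      ⁅y, prW x⁆ = ⁅y, x⁆ := by
    intro x hx y
    have h0 : ⁅y, x - prW x⁆ = 0 := hcen _ (hsub x hx) y
    rw [lie_sub, sub_eq_zero] at h0
    exact h0.symm
  -- prW can be dropped inside B against W, for arguments in z ⊕ W
  have hBpr : ∀ x ∈ (LieAlgebra.center ℝ L).toSubmodule ⊔ W, ∀ w' ∈ W,
      B (prW x) w' = B x w' := by
    intro x hx w' hw'
    have h0 : B (x - prW x) w' = 0 := hZWB _ (hsub x hx) w' hw'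
    rw [map_sub, LinearMap.sub_apply] at h0
    linarith
  have hBpr' : ∀ x ∈ (LieAlgebra.center ℝ L).toSubmodule ⊔ W, ∀ w ∈ W,
      B w (prW x) = B w x := by
    intro x hx w hw
    rw [hBsymm, hBpr x hx w hw, hBsymm]
  -- double brackets [z*, [z*, W]] land in z ⊕ W
  have hmem : ∀ a' ∈ Zstar, ∀ b' ∈ Zstar, ∀ w ∈ W,
      ⁅a', ⁅b', w⁆⁆ ∈ (LieAlgebra.center ℝ L).toSubmodule ⊔ W := by
    intro a' ha' b' hb' w hw
    have h1 : ⁅b', w⁆ ∈ H := hbrM b' (hZstarM hb') w (hWM hw)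
    have h2 := hbr₂ _ h1 a' ha'
    rw [show ⁅a', ⁅b', w⁆⁆ = -⁅⁅b', w⁆, a'⁆ from (lie_skew _ _).symm]
    exact neg_mem h2
  -- [[z*,z*],[z*,W]] = 0
  have hC : ∀ b' ∈ Zstar, ∀ c' ∈ Zstar, ∀ d' ∈ Zstar, ∀ w ∈ W,
      ⁅⁅b', c'⁆, ⁅d', w⁆⁆ = 0 := by
    intro b' hb' c' hc' d' hd' w hw
    have hbc : ⁅b', c'⁆ ∈ H := hbrM _ (hZstarM hb') _ (hZstarM hc')
    have e1 : ⁅d', ⁅w, ⁅b', c'⁆⁆⁆ = 0 := by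
      have hm : ⁅w, ⁅b', c'⁆⁆ ∈ (LieAlgebra.center ℝ L).toSubmodule := by
        have h := hbr₁ _ hbc w (Submodule.mem_sup_right hw)
        rw [show ⁅w, ⁅b', c'⁆⁆ = -⁅⁅b', c'⁆, w⁆ from (lie_skew _ _).symm]
        exact neg_mem h
      exact hcen _ hm d'
    have e2 : ⁅w, ⁅d', ⁅b', c'⁆⁆⁆ = 0 := by
      have hm : ⁅d', ⁅b', c'⁆⁆ ∈ (LieAlgebra.center ℝ L).toSubmodule ⊔ W := by
        have h := hbr₂ _ hbc d' hd'
        rw [show ⁅d', ⁅b', c'⁆⁆ = -⁅⁅b', c'⁆, d'⁆ from (lie_skew _ _).symm]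
        exact neg_mem h
      exact hWx w hw _ hm
    have e : ⁅⁅d', w⁆, ⁅b', c'⁆⁆ = 0 := by
      rw [lie_lie, e1, e2, sub_zero]
    rw [show ⁅⁅b', c'⁆, ⁅d', w⁆⁆ = -⁅⁅d', w⁆, ⁅b', c'⁆⁆ from (lie_skew _ _).symm, e, neg_zero]
  -- exact swap identity
  have hswap : ∀ b' ∈ Zstar, ∀ c' ∈ Zstar, ∀ d' ∈ Zstar, ∀ w ∈ W,
      ⁅b', ⁅c', ⁅d', w⁆⁆⁆ = ⁅c', ⁅d', ⁅b', w⁆⁆⁆ := by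
    intro b' hb' c' hc' d' hd' w hw
    rw [leibniz_lie b' c' ⁅d', w⁆, hC b' hb' c' hc' d' hd' w hw, zero_add,
      leibniz_lie b' d' w, lie_add]
    have h0 : ⁅c', ⁅⁅b', d'⁆, w⁆⁆ = 0 :=
      hcen _ (hbr₁ _ (hbrM _ (hZstarM hb') _ (hZstarM hd')) w (Submodule.mem_sup_right hw)) c'
    rw [h0, zero_add]
  refine ⟨?_, ?_, ?_⟩
  · -- (1) self-adjointness
    intro w hw w' hw'
    rw [hBpr _ (hmem a ha b hb w hw) w' hw', hBpr' _ (hmem a ha b hb w' hw') w hw,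
      hBad a ⁅b, w⁆ w']
    have j : ⁅⁅b, w⁆, w'⁆ = -⁅w, ⁅b, w'⁆⁆ := by
      rw [lie_lie, hWW w hw w' hw', lie_zero, zero_sub]
    rw [j, ← hBad w a ⁅b, w'⁆,
      show ⁅w, a⁆ = -⁅a, w⁆ from (lie_skew _ _).symm, map_neg,
      map_neg B ⁅a, w⁆, LinearMap.neg_apply, hBad a w ⁅b, w'⁆]
  · -- (2) symmetry in (a, b)
    intro w hw
    rw [leibniz_lie a b w, map_add,
      hprW₃ _ (hbr₁ _ (hbrM a (hZstarM ha) b (hZstarM hb)) w (Submodule.mem_sup_right hw)),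
      zero_add]
  · -- (3) commutativity
    intro w hw
    rw [hliepr _ (hmem c hc d hd w hw) b, hliepr _ (hmem a ha b hb w hw) d,
      hswap b hb c hc d hd w hw, leibniz_lie a c ⁅d, ⁅b, w⁆⁆, map_add,
      hprW₃ _ (hbr₁ _ (hbrM a (hZstarM ha) c (hZstarM hc)) _ (hmem d hd b hb w hw)), zero_add]
    have h0 : ⁅a, ⁅d, ⁅b, w⁆⁆⁆ = ⁅d, ⁅a, ⁅b, w⁆⁆⁆ := by
      rw [leibniz_lie a d ⁅b, w⁆, hC a ha d hd b hb w hw, zero_add]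
    rw [h0]
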